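/- Let X₁, …, Xₙ (n ≥ 2) be i.i.d. integrable real random variables. Then (X₁ + ⋯ + Xₙ)/n ≤_cx (X₁ + ⋯ + X_{n-1})/(n-1). -/

import Mathlib

open MeasureTheory

/-- The convex order `X ≤_cx Y`. -/
def ConvexOrder {Ω : Type*} [MeasurableSpace Ω] (P : Measure Ω) (X Y : Ω → ℝ) : Prop :=
  ∀ φ : ℝ → ℝ, ConvexOn ℝ Set.univ φ →
    Integrable (fun ω => φ (X ω)) P → Integrable (fun ω => φ (Y ω)) P →
    ∫ ω, φ (X ω) ∂P ≤ ∫ ω, φ (Y ω) ∂P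

open ProbabilityTheory in
lemma map_sum_card_aux {Ω : Type*} [MeasurableSpace Ω] (P : Measure Ω) [IsProbabilityMeasure P]
    (X : ℕ → Ω → ℝ) (hXm : ∀ i, Measurable (X i))
    (hindep : iIndepFun X P)
    (hident : ∀ i, Measure.map (X i) P = Measure.map (X 0) P) :
    ∀ m : ℕ, ∀ s t : Finset ℕ, s.card = m → t.card = m →
      Measure.map (fun ω => ∑ i ∈ s, X i ω) P = Measure.map (fun ω => ∑ i ∈ t, X i ω) P := by
  have hmeas : ∀ u : Finset ℕ, Measurable (fun ω => ∑ i ∈ u, X i ω) := fun u =>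
    Finset.measurable_sum u (fun i _ => hXm i)
  intro m
  induction m with
  | zero =>
    intro s t hs ht
    rw [Finset.card_eq_zero] at hs ht
    subst hs; subst ht; simp
  | succ m ih =>
    intro s t hs ht
    obtain ⟨a, s', has, rfl, hs'⟩ := Finset.card_eq_succ.mp hs
    obtain ⟨b, t', hbt, rfl, ht'⟩ := Finset.card_eq_succ.mp ht
    have key : ∀ (c : ℕ) (u : Finset ℕ), c ∉ u →
        Measure.map (fun ω => ∑ i ∈ insert c u, X i ω) P
          = Measure.map (fun p : ℝ × ℝ => p.1 + p.2)
              ((Measure.map (X 0) P).prod (Measure.map (fun ω => ∑ i ∈ u, X i ω) P)) := by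
      intro c u hcu
      have hind : IndepFun (X c) (fun ω => ∑ i ∈ u, X i ω) P := by
        have h := (hindep.indepFun_finsetSum_of_notMem hXm hcu).symm
        have he : (fun ω => ∑ i ∈ u, X i ω) = ∑ i ∈ u, X i := by
          funext ω; simp
        rw [he]; exact h
      have hmap := (indepFun_iff_map_prod_eq_prod_map_map (hXm c).aemeasurable
        (hmeas u).aemeasurable).mp hind
      have heq : (fun ω => ∑ i ∈ insert c u, X i ω)
          = (fun p : ℝ × ℝ => p.1 + p.2) ∘ (fun ω => (X c ω, ∑ i ∈ u, X i ω)) := by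
        funext ω; simp [Finset.sum_insert hcu]
      rw [heq, ← Measure.map_map (by fun_prop) ((hXm c).prodMk (hmeas u)), hmap, hident c]
    rw [key a s' has, key b t' hbt, ih s' t' hs' ht']

theorem stmt_9 {Ω : Type*} [MeasurableSpace Ω] (P : Measure Ω) [IsProbabilityMeasure P]
    {n : ℕ} (hn : 2 ≤ n) (X : ℕ → Ω → ℝ) (hXm : ∀ i, Measurable (X i))
    (hindep : ProbabilityTheory.iIndepFun X P)
    (hident : ∀ i, Measure.map (X i) P = Measure.map (X 0) P)
    (hint : ∀ i, Integrable (X i) P) :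
    ConvexOrder P (fun ω => (∑ i ∈ Finset.range n, X i ω) / n)
      (fun ω => (∑ i ∈ Finset.range (n - 1), X i ω) / (n - 1 : ℕ)) := by
  intro φ hφ hX hY
  have hφc : Continuous φ := by
    rw [← continuousOn_univ]
    exact hφ.continuousOn isOpen_univ
  set c : ℝ := ((n - 1 : ℕ) : ℝ) with hc
  have hc' : c = (n : ℝ) - 1 := by
    rw [hc]; push_cast [Nat.cast_sub (by omega : 1 ≤ n)]; ring
  have hnpos : (0 : ℝ) < n := by positivity
  have hcpos : (0 : ℝ) < c := by
    rw [hc']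
    have : (2 : ℝ) ≤ (n : ℝ) := by exact_mod_cast hn
    linarith
  set S : Ω → ℝ := fun ω => ∑ i ∈ Finset.range n, X i ω with hS
  set S' : Ω → ℝ := fun ω => ∑ i ∈ Finset.range (n - 1), X i ω with hS'
  set T : ℕ → Ω → ℝ := fun j ω => ∑ i ∈ (Finset.range n).erase j, X i ω with hT
  have hSm : Measurable S := Finset.measurable_sum _ fun i _ => hXm i
  have hS'm : Measurable S' := Finset.measurable_sum _ fun i _ => hXm i
  have hTm : ∀ j, Measurable (T j) := fun j => Finset.measurable_sum _ fun i _ => hXm i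
  -- equal laws
  have hmapT : ∀ j ∈ Finset.range n, Measure.map (T j) P = Measure.map S' P := by
    intro j hj
    exact map_sum_card_aux P X hXm hindep hident (n - 1) _ _
      (by rw [Finset.card_erase_of_mem hj, Finset.card_range]) (Finset.card_range _)
  -- g and its measurability
  set g : ℝ → ℝ := fun x => φ (x / c) with hg
  have hgm : StronglyMeasurable g := (hφc.comp (continuous_id.div_const c)).stronglyMeasurable
  -- integrability transfer
  have hYint' : ∀ j ∈ Finset.range n, Integrable (fun ω => φ (T j ω / c)) P := by
    intro j hj
    have h1 : Integrable g (Measure.map S' P) := by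
      rw [integrable_map_measure hgm.aestronglyMeasurable hS'm.aemeasurable]
      exact hY
    have h2 : Integrable g (Measure.map (T j) P) := (hmapT j hj) ▸ h1
    rwa [integrable_map_measure hgm.aestronglyMeasurable (hTm j).aemeasurable] at h2
  -- integral transfer
  have hYeq : ∀ j ∈ Finset.range n, ∫ ω, φ (T j ω / c) ∂P = ∫ ω, φ (S' ω / c) ∂P := by
    intro j hj
    have e1 : ∫ ω, φ (T j ω / c) ∂P = ∫ x, g x ∂(Measure.map (T j) P) :=
      (integral_map (hTm j).aemeasurable hgm.aestronglyMeasurable).symm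
    have e2 : ∫ ω, φ (S' ω / c) ∂P = ∫ x, g x ∂(Measure.map S' P) :=
      (integral_map hS'm.aemeasurable hgm.aestronglyMeasurable).symm
    rw [e1, e2, hmapT j hj]
  -- pointwise Jensen bound
  have hpt : ∀ ω, φ (S ω / n) ≤ ∑ j ∈ Finset.range n, (n : ℝ)⁻¹ * φ (T j ω / c) := by
    intro ω
    have hsumT : ∑ j ∈ Finset.range n, T j ω = ((n : ℝ) - 1) * S ω := by
      have hTj : ∀ j ∈ Finset.range n, T j ω = S ω - X j ω := by
        intro j hj
        have := Finset.sum_erase_add (Finset.range n) (fun i => X i ω) hj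
        rw [hT]; simp only []
        linarith [this]
      rw [Finset.sum_congr rfl hTj, Finset.sum_sub_distrib, Finset.sum_const,
        Finset.card_range, nsmul_eq_mul]
      rw [hS]; ring
    have harg : ∑ j ∈ Finset.range n, (n : ℝ)⁻¹ • (T j ω / c) = S ω / n := by
      simp only [smul_eq_mul, div_eq_mul_inv]
      rw [← Finset.mul_sum, ← Finset.sum_mul, hsumT, hc']
      have hne : (n : ℝ) ≠ 0 := ne_of_gt hnpos
      have hne2 : (n : ℝ) - 1 ≠ 0 := by rw [← hc']; exact ne_of_gt hcpos
      field_simp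
    have h := hφ.map_sum_le (t := Finset.range n) (w := fun _ => (n : ℝ)⁻¹)
      (p := fun j => T j ω / c) (fun i _ => by positivity)
      (by rw [Finset.sum_const, Finset.card_range, nsmul_eq_mul]; field_simp)
      (fun i _ => trivial)
    rw [harg] at h
    simpa [smul_eq_mul] using h
  -- combine
  have hG : Integrable (fun ω => ∑ j ∈ Finset.range n, (n : ℝ)⁻¹ * φ (T j ω / c)) P :=
    integrable_finset_sum _ fun j hj => (hYint' j hj).const_mul _
  calc ∫ ω, φ (S ω / n) ∂P
      ≤ ∫ ω, ∑ j ∈ Finset.range n, (n : ℝ)⁻¹ * φ (T j ω / c) ∂P :=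
        integral_mono hX hG hpt
    _ = ∑ j ∈ Finset.range n, ∫ ω, (n : ℝ)⁻¹ * φ (T j ω / c) ∂P :=
        integral_finset_sum _ fun j hj => (hYint' j hj).const_mul _
    _ = ∑ j ∈ Finset.range n, (n : ℝ)⁻¹ * ∫ ω, φ (T j ω / c) ∂P := by
        exact Finset.sum_congr rfl fun j hj => integral_const_mul _ _
    _ = ∑ j ∈ Finset.range n, (n : ℝ)⁻¹ * ∫ ω, φ (S' ω / c) ∂P :=
        Finset.sum_congr rfl fun j hj => by rw [hYeq j hj]
    _ = ∫ ω, φ (S' ω / c) ∂P := by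
        rw [Finset.sum_const, Finset.card_range, nsmul_eq_mul]
        field_simp
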